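/- Let (N_j)_{j∈J} be a downward-directed family of subgroups of F_n, let N = ⋂_{j∈J} N_j, and let S ⊆ N be a finite subset. Then there exist a finitely generated subgroup H with S ⊆ H ≤ N and an index j₀ ∈ J such that H is a free factor of every subgroup N' satisfying H ≤ N' ≤ N_{j₀}. -/

import Mathlib

/-- `A` is a free factor of `B` (as subgroups of an ambient group): there is a
subgroup `C ≤ B` such that the canonical map `A ∗ C → B` is an isomorphism. -/
def IsFreeFactor {G : Type} [Group G] (A B : Subgroup G) : Prop :=
  ∃ (hAB : A ≤ B) (C : Subgroup G) (hCB : C ≤ B),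
    Function.Bijective
      (Monoid.Coprod.lift (Subgroup.inclusion hAB) (Subgroup.inclusion hCB))

namespace DFF

variable {n : ℕ} {V : Type*}

abbrev Lett (n : ℕ) := Fin n × Bool
abbrev Word (n : ℕ) := List (Lett n)

/-- One step in a labeled graph: traverse an edge forwards or backwards. -/
def StepRel (E : Set (V × Fin n × V)) (u : V) (ℓ : Lett n) (v : V) : Prop :=
  if ℓ.2 then (u, ℓ.1, v) ∈ E else (v, ℓ.1, u) ∈ E

theorem StepRel.mono {E E' : Set (V × Fin n × V)} (h : E ⊆ E') {u v ℓ}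
    (hs : StepRel E u ℓ v) : StepRel E' u ℓ v := by
  unfold StepRel at *; split at hs <;> simp_all <;> exact h hs

theorem StepRel.of_inter_left {E E' : Set (V × Fin n × V)} {u v ℓ}
    (hs : StepRel (E ∩ E') u ℓ v) : StepRel E u ℓ v := StepRel.mono Set.inter_subset_left hs

theorem StepRel.of_inter_right {E E' : Set (V × Fin n × V)} {u v ℓ}
    (hs : StepRel (E ∩ E') u ℓ v) : StepRel E' u ℓ v := StepRel.mono Set.inter_subset_right hs

theorem StepRel.inter {E E' : Set (V × Fin n × V)} {u v ℓ} (h1 : StepRel E u ℓ v)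
    (h2 : StepRel E' u ℓ v) : StepRel (E ∩ E') u ℓ v := by
  unfold StepRel at *; split at h1 <;> simp_all <;> exact ⟨h1, h2⟩

def invL (ℓ : Lett n) : Lett n := (ℓ.1, !ℓ.2)

theorem StepRel.symm {E : Set (V × Fin n × V)} {u v ℓ} (h : StepRel E u ℓ v) :
    StepRel E v (invL ℓ) u := by
  unfold StepRel invL at *; rcases ℓ with ⟨i, b⟩; cases b <;> simpa using h

/-- Walks in a labeled graph, recording the word read along the way. -/
inductive Walk (E : Set (V × Fin n × V)) : V → V → Word n → Prop
  | nil (u : V) : Walk E u u []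
  | cons {u v w : V} {ℓ : Lett n} {m : Word n} :
      StepRel E u ℓ v → Walk E v w m → Walk E u w (ℓ :: m)

theorem Walk.append {E : Set (V × Fin n × V)} {u v w m₁ m₂}
    (h₁ : Walk E u v m₁) (h₂ : Walk E v w m₂) : Walk E u w (m₁ ++ m₂) := by
  induction h₁ with
  | nil => simpa using h₂
  | cons hs _ ih => exact Walk.cons hs (ih h₂)

theorem Walk.single {E : Set (V × Fin n × V)} {u v ℓ} (hs : StepRel E u ℓ v) :
    Walk E u v [ℓ] := Walk.cons hs (Walk.nil v)

theorem invRev_cons (ℓ : Lett n) (m : Word n) :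
    FreeGroup.invRev (ℓ :: m) = FreeGroup.invRev m ++ [invL ℓ] := by
  simp [FreeGroup.invRev, invL]

theorem Walk.reverse {E : Set (V × Fin n × V)} {u v m} (h : Walk E u v m) :
    Walk E v u (FreeGroup.invRev m) := by
  induction h with
  | nil => simpa [FreeGroup.invRev] using Walk.nil _
  | cons hs _ ih => rw [invRev_cons]; exact ih.append (Walk.single hs.symm)

theorem Walk.mono {E E' : Set (V × Fin n × V)} (h : E ⊆ E') {u v m}
    (hw : Walk E u v m) : Walk E' u v m := by
  induction hw with
  | nil => exact Walk.nil _
  | cons hs _ ih => exact Walk.cons (hs.mono h) ih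

/-- The subgroup of a free group read off by closed walks at a base point. -/
def Lang (E : Set (V × Fin n × V)) (b : V) : Subgroup (FreeGroup (Fin n)) where
  carrier := {x | ∃ m, Walk E b b m ∧ FreeGroup.mk m = x}
  one_mem' := ⟨[], Walk.nil b, rfl⟩
  mul_mem' := by
    rintro x y ⟨m₁, h₁, rfl⟩ ⟨m₂, h₂, rfl⟩
    exact ⟨m₁ ++ m₂, h₁.append h₂, (FreeGroup.mul_mk).symm⟩
  inv_mem' := by
    rintro x ⟨m, h, rfl⟩
    exact ⟨FreeGroup.invRev m, h.reverse, (FreeGroup.inv_mk).symm⟩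

theorem mem_Lang {E : Set (V × Fin n × V)} {b : V} {x} :
    x ∈ Lang E b ↔ ∃ m, Walk E b b m ∧ FreeGroup.mk m = x := Iff.rfl

theorem Lang.mono {E E' : Set (V × Fin n × V)} (h : E ⊆ E') (b : V) :
    Lang E b ≤ Lang E' b := by
  rintro x ⟨m, hw, rfl⟩; exact ⟨m, hw.mono h, rfl⟩

def Reach (E : Set (V × Fin n × V)) (b v : V) : Prop := ∃ m, Walk E b v m

theorem Reach.refl (E : Set (V × Fin n × V)) (b : V) : Reach E b b := ⟨[], Walk.nil b⟩

theorem Reach.step {E : Set (V × Fin n × V)} {b u v ℓ} (h : Reach E b u)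
    (hs : StepRel E u ℓ v) : Reach E b v := by
  obtain ⟨m, hm⟩ := h; exact ⟨m ++ [ℓ], hm.append (Walk.single hs)⟩

/-- Restriction of a graph to edges whose endpoints are reachable from `b`. -/
def restrict (E : Set (V × Fin n × V)) (b : V) : Set (V × Fin n × V) :=
  {e ∈ E | Reach E b e.1 ∧ Reach E b e.2.2}

theorem restrict_subset (E : Set (V × Fin n × V)) (b : V) : restrict E b ⊆ E :=
  fun _ h => h.1

theorem StepRel.restrict {E : Set (V × Fin n × V)} {b u v ℓ} (hs : StepRel E u ℓ v)
    (hu : Reach E b u) : StepRel (DFF.restrict E b) u ℓ v := by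
  have hv : Reach E b v := hu.step hs
  unfold StepRel DFF.restrict at *
  rcases ℓ with ⟨i, bb⟩; cases bb <;> simp_all

theorem Walk.restrict {E : Set (V × Fin n × V)} {b u v m} (hw : Walk E u v m)
    (hu : Reach E b u) : Walk (DFF.restrict E b) u v m := by
  induction hw with
  | nil => exact Walk.nil _
  | cons hs hw ih => exact Walk.cons (hs.restrict hu) (ih (hu.step hs))

theorem Lang_restrict (E : Set (V × Fin n × V)) (b : V) :
    Lang (restrict E b) b = Lang E b := by
  refine le_antisymm (Lang.mono (restrict_subset E b) b) ?_
  rintro x ⟨m, hw, rfl⟩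
  exact ⟨m, hw.restrict (Reach.refl E b), rfl⟩

theorem Reach_restrict_iff (E : Set (V × Fin n × V)) (b v : V) :
    Reach (restrict E b) b v ↔ Reach E b v := by
  constructor
  · rintro ⟨m, hw⟩; exact ⟨m, hw.mono (restrict_subset E b)⟩
  · rintro ⟨m, hw⟩; exact ⟨m, hw.restrict (Reach.refl E b)⟩

theorem restrict_endpoints {E : Set (V × Fin n × V)} {b : V} {e} (he : e ∈ restrict E b) :
    Reach (restrict E b) b e.1 ∧ Reach (restrict E b) b e.2.2 := by
  obtain ⟨w1, w2⟩ := he.2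
  rw [Reach_restrict_iff, Reach_restrict_iff]
  exact ⟨w1, w2⟩


/-! ### The telescoping lemma -/

theorem mk_singleton_eq (i : Fin n) (b : Bool) :
    FreeGroup.mk [(i, b)] = (if b then FreeGroup.of i else (FreeGroup.of i)⁻¹) := by
  cases b
  · simp only [if_neg Bool.false_ne_true]
    rw [show (FreeGroup.of i)⁻¹ = FreeGroup.mk (FreeGroup.invRev [(i, true)]) from
      FreeGroup.inv_mk]
    simp [FreeGroup.invRev]
  · rfl

theorem mk_cons (ℓ : Lett n) (m : Word n) :
    FreeGroup.mk (ℓ :: m) = FreeGroup.mk [ℓ] * FreeGroup.mk m := by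
  rw [FreeGroup.mul_mk]; rfl

/-- Generators of `Lang E b` attached to a vertex-labelling `w`. -/
def gset (E : Set (V × Fin n × V)) (b : V) (w : V → FreeGroup (Fin n)) :
    Set (FreeGroup (Fin n)) :=
  {x | ∃ u i v, (u, i, v) ∈ E ∧ Reach E b u ∧ x = w u * FreeGroup.of i * (w v)⁻¹}

theorem walk_mem_gclosure {E : Set (V × Fin n × V)} {b : V}
    (w : V → FreeGroup (Fin n)) {u v m} (hw : Walk E u v m) (hu : Reach E b u) :
    w u * FreeGroup.mk m * (w v)⁻¹ ∈ Subgroup.closure (gset E b w) := by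
  induction hw with
  | nil =>
    rw [← FreeGroup.one_eq_mk, mul_one, mul_inv_cancel]
    exact one_mem _
  | @cons u' v' w' ℓ m' hs hwk ih =>
    have hv' : Reach E b v' := hu.step hs
    have ihm := ih hv'
    rcases ℓ with ⟨i, bb⟩
    have key : w u' * FreeGroup.mk [(i, bb)] * (w v')⁻¹ ∈ Subgroup.closure (gset E b w) := by
      cases bb
      · -- backwards step: edge (v', i, u') ∈ E
        have hgen : w v' * FreeGroup.of i * (w u')⁻¹ ∈ gset E b w :=
          ⟨v', i, u', by simpa [StepRel] using hs, hv', rfl⟩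
        have := Subgroup.subset_closure hgen
        have h2 := inv_mem this
        simpa [mk_singleton_eq, mul_assoc] using h2
      · have hgen : w u' * FreeGroup.of i * (w v')⁻¹ ∈ gset E b w :=
          ⟨u', i, v', by simpa [StepRel] using hs, hu, rfl⟩
        simpa [mk_singleton_eq] using Subgroup.subset_closure hgen
    have : (w u' * FreeGroup.mk [(i, bb)] * (w v')⁻¹) * (w v' * FreeGroup.mk m' * (w w')⁻¹)
        ∈ Subgroup.closure (gset E b w) := mul_mem key ihm
    rw [mk_cons]
    convert this using 1
    group

/-- The telescoping lemma: closed walks are generated by the edge generators. -/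
theorem Lang_eq_closure_gset {E : Set (V × Fin n × V)} {b : V}
    {w : V → FreeGroup (Fin n)} (hwb : w b = 1)
    (hreal : ∀ v, Reach E b v → ∃ m, Walk E b v m ∧ FreeGroup.mk m = w v) :
    Lang E b = Subgroup.closure (gset E b w) := by
  apply le_antisymm
  · rintro x ⟨m, hwk, rfl⟩
    have := walk_mem_gclosure w hwk (Reach.refl E b)
    simpa [hwb] using this
  · rw [Subgroup.closure_le]
    rintro x ⟨u, i, v, he, hu, rfl⟩
    have hstep : StepRel E u (i, true) v := by simpa [StepRel] using he
    have hv : Reach E b v := hu.step hstep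
    obtain ⟨mu, hmu, hmku⟩ := hreal u hu
    obtain ⟨mv, hmv, hmkv⟩ := hreal v hv
    refine ⟨mu ++ (i, true) :: FreeGroup.invRev mv, ?_, ?_⟩
    · exact hmu.append (Walk.cons hstep hmv.reverse)
    · show FreeGroup.mk _ = _
      rw [← FreeGroup.mul_mk, mk_cons, ← FreeGroup.inv_mk, hmku, hmkv]
      simp [mk_singleton_eq, mul_assoc]


/-! ### The Schreier graph of a subgroup -/

variable (K : Subgroup (FreeGroup (Fin n)))

/-- Vertices: right cosets `Kg`. -/
def VS := Quotient (QuotientGroup.rightRel K)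

/-- Right multiplication on right cosets. -/
def vmul (c : VS K) (g : FreeGroup (Fin n)) : VS K :=
  Quotient.map' (· * g) (by
    intro a b h
    rw [QuotientGroup.rightRel_apply] at h ⊢
    simpa [mul_assoc] using h) c

def bS : VS K := Quotient.mk'' 1

variable {K}

theorem vmul_vmul (c : VS K) (g h : FreeGroup (Fin n)) :
    vmul K (vmul K c g) h = vmul K c (g * h) := by
  induction c using Quotient.inductionOn'
  simp [vmul, Quotient.map'_mk'', mul_assoc]
  rfl

theorem vmul_one (c : VS K) : vmul K c 1 = c := by
  induction c using Quotient.inductionOn'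
  simp [vmul, Quotient.map'_mk'']
  rfl

theorem bS_vmul_eq_self_iff (g : FreeGroup (Fin n)) :
    vmul K (bS K) g = bS K ↔ g ∈ K := by
  unfold bS vmul
  rw [Quotient.map'_mk'']
  change (Quotient.mk'' (1 * g) : Quotient (QuotientGroup.rightRel K)) = Quotient.mk'' 1 ↔ g ∈ K
  rw [Quotient.eq'', QuotientGroup.rightRel_apply]
  simp

theorem vmul_mem {g : FreeGroup (Fin n)} (hg : g ∈ K) : vmul K (bS K) g = bS K :=
  (bS_vmul_eq_self_iff g).mpr hg

theorem bS_vmul_surj (c : VS K) : ∃ g, vmul K (bS K) g = c := by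
  induction c using Quotient.inductionOn' with
  | h a => exact ⟨a, by simp [vmul, bS, Quotient.map'_mk'']; rfl⟩

/-- The (complete) Schreier graph: an `i`-edge from `c` to `c·xᵢ` for every coset. -/
def SE (K : Subgroup (FreeGroup (Fin n))) : Set (VS K × Fin n × VS K) :=
  {e | e.2.2 = vmul K e.1 (FreeGroup.of e.2.1)}

def lette (ℓ : Lett n) : FreeGroup (Fin n) :=
  if ℓ.2 then FreeGroup.of ℓ.1 else (FreeGroup.of ℓ.1)⁻¹

theorem mk_singleton_eq' (ℓ : Lett n) : FreeGroup.mk [ℓ] = lette ℓ := by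
  rcases ℓ with ⟨i, b⟩; exact mk_singleton_eq i b

theorem mk_cons' (ℓ : Lett n) (m : Word n) :
    FreeGroup.mk (ℓ :: m) = lette ℓ * FreeGroup.mk m := by
  rw [mk_cons, mk_singleton_eq']

/-- Where a single step leads in the Schreier graph. -/
def vstep (c : VS K) (ℓ : Lett n) : VS K := vmul K c (lette ℓ)

theorem SE_step_iff {u v : VS K} {ℓ : Lett n} :
    StepRel (SE K) u ℓ v ↔ v = vstep u ℓ := by
  rcases ℓ with ⟨i, b⟩
  cases b
  · show (v, i, u) ∈ SE K ↔ _
    show u = vmul K v (FreeGroup.of i) ↔ v = vstep u (i, false)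
    constructor
    · rintro rfl
      show v = vmul K (vmul K v (FreeGroup.of i)) (FreeGroup.of i)⁻¹
      rw [vmul_vmul, mul_inv_cancel, vmul_one]
    · rintro rfl
      show u = vmul K (vmul K u (FreeGroup.of i)⁻¹) (FreeGroup.of i)
      rw [vmul_vmul, inv_mul_cancel, vmul_one]
  · show (u, i, v) ∈ SE K ↔ _
    show v = vmul K u (FreeGroup.of i) ↔ v = vstep u (i, true)
    simp [vstep, lette]

theorem SE_step (u : VS K) (ℓ : Lett n) : StepRel (SE K) u ℓ (vstep u ℓ) :=
  SE_step_iff.mpr rfl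

theorem walk_SE_vend {E : Set (VS K × Fin n × VS K)} (hE : E ⊆ SE K) {u v m}
    (h : Walk E u v m) : v = vmul K u (FreeGroup.mk m) := by
  induction h with
  | nil => rw [← FreeGroup.one_eq_mk, vmul_one]
  | @cons u' v' w' ℓ m' hs _ ih =>
    have : v' = vstep u' ℓ := SE_step_iff.mp (hs.mono hE)
    subst this
    rw [ih, mk_cons', vstep, vmul_vmul]

theorem walk_SE_exists (u : VS K) (m : Word n) :
    Walk (SE K) u (vmul K u (FreeGroup.mk m)) m := by
  induction m generalizing u with
  | nil => rw [← FreeGroup.one_eq_mk, vmul_one]; exact Walk.nil u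
  | cons ℓ m ih =>
    have h1 := SE_step u ℓ
    have h2 := ih (vstep u ℓ)
    have : vmul K (vstep u ℓ) (FreeGroup.mk m) = vmul K u (FreeGroup.mk (ℓ :: m)) := by
      rw [vstep, vmul_vmul, mk_cons']
    rw [this] at h2
    exact Walk.cons h1 h2

theorem Lang_SE : Lang (SE K) (bS K) = K := by
  ext x
  constructor
  · rintro ⟨m, hw, rfl⟩
    have := walk_SE_vend (le_refl (SE K)) hw
    exact (bS_vmul_eq_self_iff _).mp this.symm
  · intro hx
    refine ⟨FreeGroup.toWord x, ?_, FreeGroup.mk_toWord⟩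
    have := walk_SE_exists (K := K) (bS K) (FreeGroup.toWord x)
    rwa [FreeGroup.mk_toWord, vmul_mem hx] at this

theorem reach_SE (c : VS K) : Reach (SE K) (bS K) c := by
  obtain ⟨g, hg⟩ := bS_vmul_surj c
  have h := walk_SE_exists (K := K) (bS K) (FreeGroup.toWord g)
  rw [FreeGroup.mk_toWord, hg] at h
  exact ⟨_, h⟩


/-! ### Reading labels along walks: a cocycle on the free group -/

section Dmach

variable {M : Type*} [Group M] (lab : VS K × Fin n → M)

/-- The label picked up when reading letter `ℓ` at vertex `c`. -/
def dlt (c : VS K) (ℓ : Lett n) : M :=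
  if ℓ.2 then lab (c, ℓ.1) else (lab (vmul K c (FreeGroup.of ℓ.1)⁻¹, ℓ.1))⁻¹

/-- Total label picked up along a word read from `c`. -/
def Dw : VS K → Word n → M
  | _, [] => 1
  | c, ℓ :: m => dlt lab c ℓ * Dw (vstep c ℓ) m

theorem vstep_invL (c : VS K) (ℓ : Lett n) : vstep (vstep c ℓ) (invL ℓ) = c := by
  rcases ℓ with ⟨i, b⟩
  cases b <;>
    · show vmul K (vmul K c _) _ = c
      rw [vmul_vmul]
      simp [lette, invL, vmul_one]

theorem dlt_cancel (c : VS K) (ℓ : Lett n) :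
    dlt lab (vstep c ℓ) (invL ℓ) = (dlt lab c ℓ)⁻¹ := by
  rcases ℓ with ⟨i, b⟩
  cases b
  · show (dlt lab (vmul K c (FreeGroup.of i)⁻¹) (i, true)) = _
    show lab (vmul K c (FreeGroup.of i)⁻¹, i) = _
    show _ = ((lab (vmul K c (FreeGroup.of i)⁻¹, i))⁻¹)⁻¹
    rw [inv_inv]
  · show (lab (vmul K (vmul K c (FreeGroup.of i)) (FreeGroup.of i)⁻¹, i))⁻¹ = (lab (c, i))⁻¹
    rw [vmul_vmul, mul_inv_cancel, vmul_one]

theorem Dw_append (c : VS K) (m₁ m₂ : Word n) :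
    Dw lab c (m₁ ++ m₂) = Dw lab c m₁ * Dw lab (vmul K c (FreeGroup.mk m₁)) m₂ := by
  induction m₁ generalizing c with
  | nil =>
    rw [← FreeGroup.one_eq_mk, vmul_one]
    simp [Dw]
  | cons ℓ m ih =>
    show dlt lab c ℓ * Dw lab (vstep c ℓ) (m ++ m₂) = _
    rw [ih]
    have : vmul K (vstep c ℓ) (FreeGroup.mk m) = vmul K c (FreeGroup.mk (ℓ :: m)) := by
      rw [vstep, vmul_vmul, mk_cons']
    rw [this, Dw, mul_assoc]

theorem Dw_red_step (c : VS K) {m₁ m₂ : Word n} (h : FreeGroup.Red.Step m₁ m₂) :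
    Dw lab c m₁ = Dw lab c m₂ := by
  cases h with
  | @not L₁ L₂ x b =>
    rw [show L₁ ++ (x, b) :: (x, !b) :: L₂ = L₁ ++ ((x, b) :: (x, !b) :: L₂) from rfl]
    rw [Dw_append, Dw_append]
    congr 1
    set v := vmul K c (FreeGroup.mk L₁)
    show dlt lab v (x, b) * (dlt lab (vstep v (x, b)) (x, !b) *
        Dw lab (vstep (vstep v (x, b)) (x, !b)) L₂) = Dw lab v L₂
    rw [show ((x, !b) : Lett n) = invL (x, b) from rfl, vstep_invL, dlt_cancel]
    rw [← mul_assoc, mul_inv_cancel, one_mul]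

/-- `Dw` descends to the free group. -/
def Dbar (c : VS K) : FreeGroup (Fin n) → M :=
  Quot.lift (Dw lab c) (fun _ _ h => Dw_red_step lab c h)

theorem Dbar_mk (c : VS K) (m : Word n) : Dbar lab c (FreeGroup.mk m) = Dw lab c m := rfl

theorem Dbar_mul (c : VS K) (g h : FreeGroup (Fin n)) :
    Dbar lab c (g * h) = Dbar lab c g * Dbar lab (vmul K c g) h := by
  induction g using Quot.inductionOn with
  | h L₁ =>
    induction h using Quot.inductionOn with
    | h L₂ =>
      show Dbar lab c (FreeGroup.mk L₁ * FreeGroup.mk L₂) = _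
      rw [FreeGroup.mul_mk]
      show Dw lab c (L₁ ++ L₂) = _
      rw [Dw_append]
      rfl

theorem Dbar_one (c : VS K) : Dbar lab c (1 : FreeGroup (Fin n)) = 1 := rfl

/-- Walks whose labels are all trivial contribute trivial `Dw`. -/
theorem Dw_eq_one_of_trivial {E : Set (VS K × Fin n × VS K)} (hE : E ⊆ SE K)
    (hlab : ∀ c i, StepRel E c (i, true) (vstep c (i, true)) → lab (c, i) = 1)
    {u v m} (hw : Walk E u v m) : Dw lab u m = 1 := by
  induction hw with
  | nil => rfl
  | @cons u' v' w' ℓ m' hs hwk ih =>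
    have hv' : v' = vstep u' ℓ := SE_step_iff.mp (hs.mono hE)
    rcases ℓ with ⟨i, b⟩
    cases b
    · -- backwards: edge (v', i, u') ∈ E; u' = vstep v' (i,true)
      have hsE : StepRel E v' (i, true) u' := by simpa [StepRel] using hs
      have hu' : u' = vstep v' (i, true) := by
        have := SE_step_iff.mp (hsE.mono hE); exact this
      have h1 : lab (v', i) = 1 := hlab v' i (hu' ▸ hsE)
      show dlt lab u' (i, false) * Dw lab (vstep u' (i, false)) m' = 1
      have hv'2 : vmul K u' (FreeGroup.of i)⁻¹ = v' := by
        rw [hu']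
        show vmul K (vmul K v' _) _ = v'
        rw [vmul_vmul]
        simp [lette, vmul_one]
      rw [show dlt lab u' (i, false) = (lab (vmul K u' (FreeGroup.of i)⁻¹, i))⁻¹ from rfl]
      rw [hv'2, h1, inv_one, one_mul, ← hv']
      exact ih
    · have hsE : StepRel E u' (i, true) v' := hs
      have h1 : lab (u', i) = 1 := hlab u' i (hv' ▸ hsE)
      show dlt lab u' (i, true) * Dw lab (vstep u' (i, true)) m' = 1
      rw [show dlt lab u' (i, true) = lab (u', i) from rfl, h1, one_mul, ← hv', ih]

end Dmach


/-! ### Distances and parents -/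

noncomputable def dist (E : Set (V × Fin n × V)) (b v : V) : ℕ :=
  sInf {k | ∃ m, Walk E b v m ∧ m.length = k}

theorem dist_exists {E : Set (V × Fin n × V)} {b v : V} (h : Reach E b v) :
    ∃ m, Walk E b v m ∧ m.length = dist E b v := by
  obtain ⟨m, hm⟩ := h
  exact Nat.sInf_mem (s := {k | ∃ m, Walk E b v m ∧ m.length = k}) ⟨m.length, m, hm, rfl⟩

theorem dist_le {E : Set (V × Fin n × V)} {b v : V} {m} (h : Walk E b v m) :
    dist E b v ≤ m.length := Nat.sInf_le ⟨m, h, rfl⟩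

theorem walk_split {E : Set (V × Fin n × V)} {u w m₁ m₂}
    (h : Walk E u w (m₁ ++ m₂)) : ∃ v, Walk E u v m₁ ∧ Walk E v w m₂ := by
  induction m₁ generalizing u with
  | nil => exact ⟨u, Walk.nil u, h⟩
  | cons ℓ m ih =>
    cases h with
    | cons hs hw =>
      obtain ⟨v, h1, h2⟩ := ih hw
      exact ⟨v, Walk.cons hs h1, h2⟩

theorem exists_parent {E : Set (V × Fin n × V)} {b v : V} (hr : Reach E b v)
    (hv : v ≠ b) : ∃ u ℓ, StepRel E u ℓ v ∧ Reach E b u ∧ dist E b u < dist E b v := by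
  obtain ⟨m, hm, hlen⟩ := dist_exists hr
  rcases List.eq_nil_or_concat m with rfl | ⟨m', ℓ, rfl⟩
  · cases hm; exact absurd rfl hv
  · rw [List.concat_eq_append] at hm hlen
    obtain ⟨u, h1, h2⟩ := walk_split hm
    have hstep : StepRel E u ℓ v := by
      cases h2 with
      | cons hs hw => cases hw; exact hs
    refine ⟨u, ℓ, hstep, ⟨m', h1⟩, ?_⟩
    calc dist E b u ≤ m'.length := dist_le h1
    _ < (m' ++ [ℓ]).length := by simp
    _ = dist E b v := hlen

/-! ### The adapted spanning tree -/

section Tree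

variable (Δ : Set (VS K × Fin n × VS K))

noncomputable def treeB (hfin : {v | Reach Δ (bS K) v}.Finite) : ℕ :=
  hfin.toFinset.sup (dist Δ (bS K))

open Classical in
noncomputable def mu (hfin : {v | Reach Δ (bS K) v}.Finite) (v : VS K) : ℕ :=
  if Reach Δ (bS K) v then dist Δ (bS K) v
  else dist (SE K) (bS K) v + treeB Δ hfin + 1

theorem exists_parentD (hΔ : Δ ⊆ SE K) (hfin : {v | Reach Δ (bS K) v}.Finite)
    (v : VS K) (hv : v ≠ bS K) :
    ∃ p : VS K × Lett n, StepRel (SE K) p.1 p.2 v ∧ mu Δ hfin p.1 < mu Δ hfin v ∧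
      (Reach Δ (bS K) v → StepRel Δ p.1 p.2 v ∧ Reach Δ (bS K) p.1) := by
  by_cases hr : Reach Δ (bS K) v
  · obtain ⟨u, ℓ, hs, hu, hd⟩ := exists_parent hr hv
    refine ⟨(u, ℓ), hs.mono hΔ, ?_, fun _ => ⟨hs, hu⟩⟩
    show mu Δ hfin u < mu Δ hfin v
    rw [mu, mu, if_pos hr, if_pos hu]
    exact hd
  · obtain ⟨u, ℓ, hs, hu, hd⟩ := exists_parent (reach_SE v) hv
    refine ⟨(u, ℓ), hs, ?_, fun h => absurd h hr⟩
    show mu Δ hfin u < mu Δ hfin v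
    rw [mu, mu, if_neg hr]
    by_cases hru : Reach Δ (bS K) u
    · rw [if_pos hru]
      have : dist Δ (bS K) u ≤ treeB Δ hfin :=
        Finset.le_sup (f := dist Δ (bS K)) (hfin.mem_toFinset.mpr hru)
      omega
    · rw [if_neg hru]; omega

variable (hΔ : Δ ⊆ SE K) (hfin : {v | Reach Δ (bS K) v}.Finite)

noncomputable def parentD (v : VS K) (hv : v ≠ bS K) : VS K × Lett n :=
  Classical.choose (exists_parentD Δ hΔ hfin v hv)

theorem parentD_step (v : VS K) (hv : v ≠ bS K) :
    StepRel (SE K) (parentD Δ hΔ hfin v hv).1 (parentD Δ hΔ hfin v hv).2 v :=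
  (Classical.choose_spec (exists_parentD Δ hΔ hfin v hv)).1

theorem parentD_mu (v : VS K) (hv : v ≠ bS K) :
    mu Δ hfin (parentD Δ hΔ hfin v hv).1 < mu Δ hfin v :=
  (Classical.choose_spec (exists_parentD Δ hΔ hfin v hv)).2.1

theorem parentD_delta (v : VS K) (hv : v ≠ bS K) (hr : Reach Δ (bS K) v) :
    StepRel Δ (parentD Δ hΔ hfin v hv).1 (parentD Δ hΔ hfin v hv).2 v ∧
      Reach Δ (bS K) (parentD Δ hΔ hfin v hv).1 :=
  (Classical.choose_spec (exists_parentD Δ hΔ hfin v hv)).2.2 hr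

open Classical in
/-- The word labelling each vertex, read along the tree of parents. -/
noncomputable def wfn (v : VS K) : FreeGroup (Fin n) :=
  if hv : v = bS K then 1
  else wfn (parentD Δ hΔ hfin v hv).1 * lette (parentD Δ hΔ hfin v hv).2
termination_by mu Δ hfin v
decreasing_by exact parentD_mu Δ hΔ hfin v hv

/-- The edge identifier used by the parent step into `v`. -/
noncomputable def eid (v : VS K) (hv : v ≠ bS K) : VS K × Fin n :=
  if (parentD Δ hΔ hfin v hv).2.2 then
    ((parentD Δ hΔ hfin v hv).1, (parentD Δ hΔ hfin v hv).2.1)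
  else (v, (parentD Δ hΔ hfin v hv).2.1)

/-- The tree edges. -/
noncomputable def TT : Set (VS K × Fin n) := {p | ∃ v hv, p = eid Δ hΔ hfin v hv}

/-- The Schreier graph restricted to tree edges. -/
noncomputable def SET : Set (VS K × Fin n × VS K) :=
  SE K ∩ {e | (e.1, e.2.1) ∈ TT Δ hΔ hfin}

theorem SET_subset : SET Δ hΔ hfin ⊆ SE K := Set.inter_subset_left

theorem wfn_b : wfn Δ hΔ hfin (bS K) = 1 := by rw [wfn]; exact dif_pos rfl

theorem wfn_walk (v : VS K) :
    ∃ m, Walk (SET Δ hΔ hfin) (bS K) v m ∧ FreeGroup.mk m = wfn Δ hΔ hfin v ∧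
      (Reach Δ (bS K) v → Walk (Δ ∩ SET Δ hΔ hfin) (bS K) v m) := by
  suffices h : ∀ N v, mu Δ hfin v < N → ∃ m, Walk (SET Δ hΔ hfin) (bS K) v m ∧
      FreeGroup.mk m = wfn Δ hΔ hfin v ∧
      (Reach Δ (bS K) v → Walk (Δ ∩ SET Δ hΔ hfin) (bS K) v m) from
    h (mu Δ hfin v + 1) v (Nat.lt_succ_self _)
  intro N
  induction N with
  | zero => intro v hv; omega
  | succ N ih =>
    intro v hv
    by_cases hb : v = bS K
    · subst hb
      refine ⟨[], Walk.nil _, ?_, fun _ => Walk.nil _⟩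
      rw [wfn_b, ← FreeGroup.one_eq_mk]
    · set p := parentD Δ hΔ hfin v hb with hp
      have hmu : mu Δ hfin p.1 < N := by
        have h2 := parentD_mu Δ hΔ hfin v hb
        rw [← hp] at h2
        omega
      obtain ⟨m', hw', hmk', hΔw'⟩ := ih p.1 hmu
      have hidT : (eid Δ hΔ hfin v hb) ∈ TT Δ hΔ hfin := ⟨v, hb, rfl⟩
      have hstepT : StepRel (SET Δ hΔ hfin) p.1 p.2 v := by
        refine StepRel.inter (parentD_step Δ hΔ hfin v hb) ?_
        rcases hℓ : p.2 with ⟨i, bb⟩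
        have heid : eid Δ hΔ hfin v hb = if bb then (p.1, i) else (v, i) := by
          rw [eid, ← hp, hℓ]
        cases bb
        · show (v, i, p.1) ∈ {e | (e.1, e.2.1) ∈ TT Δ hΔ hfin}
          show (v, i) ∈ TT Δ hΔ hfin
          rw [show (v, i) = eid Δ hΔ hfin v hb by rw [heid]; rfl]
          exact hidT
        · show (p.1, i, v) ∈ {e | (e.1, e.2.1) ∈ TT Δ hΔ hfin}
          show (p.1, i) ∈ TT Δ hΔ hfin
          rw [show (p.1, i) = eid Δ hΔ hfin v hb by rw [heid]; rfl]
          exact hidT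
      refine ⟨m' ++ [p.2], hw'.append (Walk.single hstepT), ?_, ?_⟩
      · rw [← FreeGroup.mul_mk, hmk', mk_singleton_eq']
        conv_rhs => rw [wfn]
        rw [dif_neg hb, ← hp]
      · intro hr
        obtain ⟨hsΔ, hrp⟩ := parentD_delta Δ hΔ hfin v hb hr
        exact (hΔw' hrp).append (Walk.single (StepRel.inter hsΔ hstepT))

theorem wfn_vend (v : VS K) : vmul K (bS K) (wfn Δ hΔ hfin v) = v := by
  obtain ⟨m, hw, hmk, -⟩ := wfn_walk Δ hΔ hfin v
  have := walk_SE_vend (SET_subset Δ hΔ hfin) hw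
  rw [← hmk, this]

end Tree


/-! ### The free factor theorem -/

section FF

variable (Δ : Set (VS K × Fin n × VS K)) (hΔ : Δ ⊆ SE K)
  (hfin : {v | Reach Δ (bS K) v}.Finite)

/-- The Schreier-type generator attached to the edge `(c, i)`. -/
noncomputable def gf (c : VS K) (i : Fin n) : FreeGroup (Fin n) :=
  wfn Δ hΔ hfin c * FreeGroup.of i * (wfn Δ hΔ hfin (vmul K c (FreeGroup.of i)))⁻¹

/-- Edge identifiers belonging to `Δ`. -/
def DId : Set (VS K × Fin n) := {p | (p.1, p.2, vmul K p.1 (FreeGroup.of p.2)) ∈ Δ}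

theorem gf_eq_mk {c : VS K} {i : Fin n} {mc md : Word n}
    (hmkc : FreeGroup.mk mc = wfn Δ hΔ hfin c)
    (hmkd : FreeGroup.mk md = wfn Δ hΔ hfin (vmul K c (FreeGroup.of i))) :
    gf Δ hΔ hfin c i = FreeGroup.mk (mc ++ (i, true) :: FreeGroup.invRev md) := by
  rw [← FreeGroup.mul_mk, mk_cons', ← FreeGroup.inv_mk, hmkc, hmkd]
  rw [show lette ((i : Fin n), true) = FreeGroup.of i from rfl]
  rw [gf, mul_assoc]

theorem SE_step_of (c : VS K) (i : Fin n) :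
    StepRel (SE K) c (i, true) (vmul K c (FreeGroup.of i)) := by
  have := SE_step (K := K) c (i, true)
  rwa [show vstep c ((i : Fin n), true) = vmul K c (FreeGroup.of i) from rfl] at this

theorem gf_mem_K (c : VS K) (i : Fin n) : gf Δ hΔ hfin c i ∈ K := by
  obtain ⟨mc, hwc, hmkc, -⟩ := wfn_walk Δ hΔ hfin c
  obtain ⟨md, hwd, hmkd, -⟩ := wfn_walk Δ hΔ hfin (vmul K c (FreeGroup.of i))
  have hmem : gf Δ hΔ hfin c i ∈ Lang (SE K) (bS K) := by
    refine ⟨mc ++ (i, true) :: FreeGroup.invRev md, ?_, (gf_eq_mk Δ hΔ hfin hmkc hmkd).symm⟩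
    exact (hwc.mono (SET_subset Δ hΔ hfin)).append
      (Walk.cons (SE_step_of c i) (hwd.mono (SET_subset Δ hΔ hfin)).reverse)
  rwa [Lang_SE] at hmem

theorem gf_mem_A (hend : ∀ e ∈ Δ, Reach Δ (bS K) e.1 ∧ Reach Δ (bS K) e.2.2)
    {c : VS K} {i : Fin n} (h : (c, i) ∈ DId Δ) :
    gf Δ hΔ hfin c i ∈ Lang Δ (bS K) := by
  have hedge : (c, i, vmul K c (FreeGroup.of i)) ∈ Δ := h
  have hrc : Reach Δ (bS K) c := (hend _ hedge).1
  have hrd : Reach Δ (bS K) (vmul K c (FreeGroup.of i)) := (hend _ hedge).2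
  obtain ⟨mc, -, hmkc, hΔc⟩ := wfn_walk Δ hΔ hfin c
  obtain ⟨md, -, hmkd, hΔd⟩ := wfn_walk Δ hΔ hfin (vmul K c (FreeGroup.of i))
  refine ⟨mc ++ (i, true) :: FreeGroup.invRev md, ?_, (gf_eq_mk Δ hΔ hfin hmkc hmkd).symm⟩
  have hstep : StepRel Δ c (i, true) (vmul K c (FreeGroup.of i)) := hedge
  exact ((hΔc hrc).mono Set.inter_subset_left).append
    (Walk.cons hstep ((hΔd hrd).mono Set.inter_subset_left).reverse)

/-- Generators of the complement. -/
noncomputable def CG : Set (FreeGroup (Fin n)) :=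
  {x | ∃ c i, (c, i) ∉ TT Δ hΔ hfin ∧ (c, i) ∉ DId Δ ∧ x = gf Δ hΔ hfin c i}

noncomputable def CC : Subgroup (FreeGroup (Fin n)) := Subgroup.closure (CG Δ hΔ hfin)

theorem CC_le_K : CC Δ hΔ hfin ≤ K := by
  rw [CC, Subgroup.closure_le]
  rintro x ⟨c, i, -, -, rfl⟩
  exact gf_mem_K Δ hΔ hfin c i

open Classical in
/-- Labels on the Schreier graph, valued in the coproduct. -/
noncomputable def lab (hend : ∀ e ∈ Δ, Reach Δ (bS K) e.1 ∧ Reach Δ (bS K) e.2.2)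
    (p : VS K × Fin n) : Monoid.Coprod ↥(Lang Δ (bS K)) ↥(CC Δ hΔ hfin) :=
  if hT : p ∈ TT Δ hΔ hfin then 1
  else if h : p ∈ DId Δ then
    Monoid.Coprod.inl ⟨gf Δ hΔ hfin p.1 p.2, gf_mem_A Δ hΔ hfin hend h⟩
  else Monoid.Coprod.inr ⟨gf Δ hΔ hfin p.1 p.2,
    Subgroup.subset_closure ⟨p.1, p.2, hT, h, rfl⟩⟩

variable (hend : ∀ e ∈ Δ, Reach Δ (bS K) e.1 ∧ Reach Δ (bS K) e.2.2)

theorem lab_T {p : VS K × Fin n} (h : p ∈ TT Δ hΔ hfin) : lab Δ hΔ hfin hend p = 1 := by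
  rw [lab, dif_pos h]

theorem lab_trivial_on_tree : ∀ (c : VS K) (i : Fin n),
    StepRel (SET Δ hΔ hfin) c (i, true) (vstep c (i, true)) →
      lab Δ hΔ hfin hend (c, i) = 1 := by
  intro c i hs
  have : (c, i, vstep c ((i : Fin n), true)) ∈ SET Δ hΔ hfin := hs
  exact lab_T Δ hΔ hfin hend this.2

theorem gf_T {c : VS K} {i : Fin n} (h : (c, i) ∈ TT Δ hΔ hfin) :
    gf Δ hΔ hfin c i = 1 := by
  obtain ⟨v, hv, heid⟩ := h
  rcases hdir : (parentD Δ hΔ hfin v hv).2.2 with _ | _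
  · -- backwards parent edge: eid = (v, _)
    rw [eid, if_neg (by rw [hdir]; simp)] at heid
    have hvc : c = v := congrArg Prod.fst heid
    have hpi : i = (parentD Δ hΔ hfin v hv).2.1 := congrArg Prod.snd heid
    rw [hvc, hpi]
    have hp2 : (parentD Δ hΔ hfin v hv).2 =
        ((parentD Δ hΔ hfin v hv).2.1, false) := by rw [← hdir]
    have hstep := parentD_step Δ hΔ hfin v hv
    rw [hp2] at hstep
    have hv2 : v = vstep (parentD Δ hΔ hfin v hv).1 ((parentD Δ hΔ hfin v hv).2.1, false) :=
      SE_step_iff.mp hstep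
    have hvm : vmul K v (FreeGroup.of (parentD Δ hΔ hfin v hv).2.1) =
        (parentD Δ hΔ hfin v hv).1 := by
      have h3 := congrArg (fun z => vmul K z (FreeGroup.of (parentD Δ hΔ hfin v hv).2.1)) hv2
      rw [h3]
      show vmul K (vmul K _ (FreeGroup.of _)⁻¹) _ = _
      rw [vmul_vmul, inv_mul_cancel, vmul_one]
    have hwv : wfn Δ hΔ hfin v = wfn Δ hΔ hfin (parentD Δ hΔ hfin v hv).1 *
        (FreeGroup.of (parentD Δ hΔ hfin v hv).2.1)⁻¹ := by
      conv_lhs => rw [wfn]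
      rw [dif_neg hv, hp2]
      rfl
    rw [gf, hvm, hwv]
    group
  · -- forwards parent edge: eid = (parent, _)
    rw [eid, if_pos (by rw [hdir])] at heid
    have hpc : c = (parentD Δ hΔ hfin v hv).1 := congrArg Prod.fst heid
    have hpi : i = (parentD Δ hΔ hfin v hv).2.1 := congrArg Prod.snd heid
    rw [hpc, hpi]
    have hp2 : (parentD Δ hΔ hfin v hv).2 =
        ((parentD Δ hΔ hfin v hv).2.1, true) := by rw [← hdir]
    have hstep := parentD_step Δ hΔ hfin v hv
    rw [hp2] at hstep
    have hv2 : v = vmul K (parentD Δ hΔ hfin v hv).1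
        (FreeGroup.of (parentD Δ hΔ hfin v hv).2.1) := SE_step_iff.mp hstep
    have hwv : wfn Δ hΔ hfin v = wfn Δ hΔ hfin (parentD Δ hΔ hfin v hv).1 *
        FreeGroup.of (parentD Δ hΔ hfin v hv).2.1 := by
      conv_lhs => rw [wfn]
      rw [dif_neg hv, hp2]
      rfl
    rw [gf, ← hv2, hwv]
    group

theorem Dgen (c : VS K) (i : Fin n) :
    Dbar (lab Δ hΔ hfin hend) (bS K) (gf Δ hΔ hfin c i) = lab Δ hΔ hfin hend (c, i) := by
  obtain ⟨mc, hwc, hmkc, -⟩ := wfn_walk Δ hΔ hfin c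
  obtain ⟨md, hwd, hmkd, -⟩ := wfn_walk Δ hΔ hfin (vmul K c (FreeGroup.of i))
  rw [gf_eq_mk Δ hΔ hfin hmkc hmkd, Dbar_mk, Dw_append]
  have h1 : Dw (lab Δ hΔ hfin hend) (bS K) mc = 1 :=
    Dw_eq_one_of_trivial _ (SET_subset Δ hΔ hfin) (lab_trivial_on_tree Δ hΔ hfin hend) hwc
  have h2 : vmul K (bS K) (FreeGroup.mk mc) = c := by rw [hmkc, wfn_vend]
  rw [h1, h2, one_mul]
  show dlt (lab Δ hΔ hfin hend) c (i, true) *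
      Dw (lab Δ hΔ hfin hend) (vstep c (i, true)) (FreeGroup.invRev md) = _
  have h3 : Dw (lab Δ hΔ hfin hend) (vstep c (i, true)) (FreeGroup.invRev md) = 1 := by
    rw [show vstep c ((i : Fin n), true) = vmul K c (FreeGroup.of i) from rfl]
    exact Dw_eq_one_of_trivial _ (SET_subset Δ hΔ hfin)
      (lab_trivial_on_tree Δ hΔ hfin hend) hwd.reverse
  rw [h3, mul_one]
  rfl


/-- Generators of `Lang Δ`. -/
noncomputable def genA : Set (FreeGroup (Fin n)) :=
  {x | ∃ c i, (c, i) ∈ DId Δ ∧ x = gf Δ hΔ hfin c i}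

/-- All Schreier generators. -/
noncomputable def genK : Set (FreeGroup (Fin n)) := {x | ∃ c i, x = gf Δ hΔ hfin c i}

include hend in
theorem A_eq_closure : Lang Δ (bS K) = Subgroup.closure (genA Δ hΔ hfin) := by
  have h1 : Lang Δ (bS K) =
      Subgroup.closure (gset Δ (bS K) (wfn Δ hΔ hfin)) := by
    refine Lang_eq_closure_gset (wfn_b Δ hΔ hfin) ?_
    intro v hr
    obtain ⟨m, -, hmk, hΔw⟩ := wfn_walk Δ hΔ hfin v
    exact ⟨m, (hΔw hr).mono Set.inter_subset_left, hmk⟩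
  rw [h1]
  congr 1
  ext x
  constructor
  · rintro ⟨u, i, v, he, hu, rfl⟩
    have hv : v = vmul K u (FreeGroup.of i) := hΔ he
    refine ⟨u, i, ?_, ?_⟩
    · show (u, i, vmul K u (FreeGroup.of i)) ∈ Δ
      rwa [← hv]
    · rw [gf, hv]
  · rintro ⟨c, i, hD, rfl⟩
    exact ⟨c, i, vmul K c (FreeGroup.of i), hD, (hend _ hD).1, rfl⟩

theorem K_eq_closure : Subgroup.closure (genK Δ hΔ hfin) = K := by
  have h1 : Lang (SE K) (bS K) =
      Subgroup.closure (gset (SE K) (bS K) (wfn Δ hΔ hfin)) := by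
    refine Lang_eq_closure_gset (wfn_b Δ hΔ hfin) ?_
    intro v hr
    obtain ⟨m, hw, hmk, -⟩ := wfn_walk Δ hΔ hfin v
    exact ⟨m, hw.mono (SET_subset Δ hΔ hfin), hmk⟩
  have h2 : Lang (SE K) (bS K) = Subgroup.closure (genK Δ hΔ hfin) := by
    rw [h1]
    congr 1
    ext x
    constructor
    · rintro ⟨u, i, v, he, hu, rfl⟩
      have hv : v = vmul K u (FreeGroup.of i) := he
      exact ⟨u, i, by rw [gf, hv]⟩
    · rintro ⟨c, i, rfl⟩
      exact ⟨c, i, vmul K c (FreeGroup.of i), rfl, reach_SE c, rfl⟩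
  rw [← h2, Lang_SE]

include hend in
theorem Dbar_A : ∀ x ∈ Subgroup.closure (genA Δ hΔ hfin),
    ∀ (hx : x ∈ Lang Δ (bS K)),
      Dbar (lab Δ hΔ hfin hend) (bS K) x = Monoid.Coprod.inl ⟨x, hx⟩ := by
  have hAle : Lang Δ (bS K) ≤ K := by
    have := Lang.mono hΔ (bS K); rwa [Lang_SE] at this
  intro x hx
  induction hx using Subgroup.closure_induction with
  | mem y hy =>
    intro hyA
    obtain ⟨c, i, hD, rfl⟩ := hy
    rw [Dgen Δ hΔ hfin hend c i, lab]
    by_cases hT : (c, i) ∈ TT Δ hΔ hfin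
    · rw [dif_pos hT]
      rw [show (⟨gf Δ hΔ hfin c i, hyA⟩ : ↥(Lang Δ (bS K))) = 1 from
        Subtype.ext (gf_T Δ hΔ hfin hT), map_one]
    · rw [dif_neg hT, dif_pos hD]
  | one =>
    intro h1
    rw [Dbar_one]
    rw [show (⟨1, h1⟩ : ↥(Lang Δ (bS K))) = 1 from rfl, map_one]
  | mul x y hxc hyc ihx ihy =>
    intro hxyA
    have hxA : x ∈ Lang Δ (bS K) := by rw [A_eq_closure Δ hΔ hfin hend]; exact hxc
    have hyA : y ∈ Lang Δ (bS K) := by rw [A_eq_closure Δ hΔ hfin hend]; exact hyc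
    rw [Dbar_mul, vmul_mem (hAle hxA), ihx hxA, ihy hyA, ← map_mul]
    rfl
  | inv x hxc ihx =>
    intro hxiA
    have hxA : x ∈ Lang Δ (bS K) := by rw [A_eq_closure Δ hΔ hfin hend]; exact hxc
    have hmul := Dbar_mul (lab Δ hΔ hfin hend) (bS K) x x⁻¹
    rw [mul_inv_cancel, Dbar_one, vmul_mem (hAle hxA)] at hmul
    have hinv : Dbar (lab Δ hΔ hfin hend) (bS K) x⁻¹ =
        (Dbar (lab Δ hΔ hfin hend) (bS K) x)⁻¹ := by
      rw [eq_inv_of_mul_eq_one_right hmul.symm]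
    rw [hinv, ihx hxA, ← map_inv]
    rfl

include hend in
theorem Dbar_C : ∀ x ∈ CC Δ hΔ hfin,
    ∀ (hx : x ∈ CC Δ hΔ hfin),
      Dbar (lab Δ hΔ hfin hend) (bS K) x = Monoid.Coprod.inr ⟨x, hx⟩ := by
  intro x hx
  induction hx using Subgroup.closure_induction with
  | mem y hy =>
    intro hyC
    obtain ⟨c, i, hT, hD, rfl⟩ := hy
    rw [Dgen Δ hΔ hfin hend c i, lab, dif_neg hT, dif_neg hD]
  | one =>
    intro h1
    rw [Dbar_one]
    rw [show (⟨1, h1⟩ : ↥(CC Δ hΔ hfin)) = 1 from rfl, map_one]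
  | mul x y hxc hyc ihx ihy =>
    intro hxyC
    have hxC : x ∈ CC Δ hΔ hfin := hxc
    have hyC : y ∈ CC Δ hΔ hfin := hyc
    rw [Dbar_mul, vmul_mem (CC_le_K Δ hΔ hfin hxC), ihx hxC, ihy hyC, ← map_mul]
    rfl
  | inv x hxc ihx =>
    intro hxiC
    have hxC : x ∈ CC Δ hΔ hfin := hxc
    have hmul := Dbar_mul (lab Δ hΔ hfin hend) (bS K) x x⁻¹
    rw [mul_inv_cancel, Dbar_one, vmul_mem (CC_le_K Δ hΔ hfin hxC)] at hmul
    have hinv : Dbar (lab Δ hΔ hfin hend) (bS K) x⁻¹ =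
        (Dbar (lab Δ hΔ hfin hend) (bS K) x)⁻¹ := by
      rw [eq_inv_of_mul_eq_one_right hmul.symm]
    rw [hinv, ihx hxC, ← map_inv]
    rfl

include hΔ hfin hend in
theorem isFreeFactor_Lang_aux : IsFreeFactor (Lang Δ (bS K)) K := by
  have hAB : Lang Δ (bS K) ≤ K := by
    have := Lang.mono hΔ (bS K); rwa [Lang_SE] at this
  have hCB : CC Δ hΔ hfin ≤ K := CC_le_K Δ hΔ hfin
  refine ⟨hAB, CC Δ hΔ hfin, hCB, ?_, ?_⟩
  · -- injectivity
    set L := Monoid.Coprod.lift (Subgroup.inclusion hAB) (Subgroup.inclusion hCB) with hLdef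
    set ρ : ↥K →* Monoid.Coprod ↥(Lang Δ (bS K)) ↥(CC Δ hΔ hfin) := MonoidHom.mk'
      (fun k => Dbar (lab Δ hΔ hfin hend) (bS K) k.1)
      (fun k₁ k₂ => by
        show Dbar _ _ (k₁.1 * k₂.1) = _
        rw [Dbar_mul, vmul_mem k₁.2]) with hρdef
    have hcomp : ρ.comp L = MonoidHom.id _ := by
      apply Monoid.Coprod.hom_ext
      · ext a
        show ρ (L (Monoid.Coprod.inl a)) = Monoid.Coprod.inl a
        rw [hLdef, Monoid.Coprod.lift_apply_inl]
        show Dbar (lab Δ hΔ hfin hend) (bS K) a.1 = _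
        rw [Dbar_A Δ hΔ hfin hend a.1
          (by rw [← A_eq_closure Δ hΔ hfin hend]; exact a.2) a.2]
      · ext a
        show ρ (L (Monoid.Coprod.inr a)) = Monoid.Coprod.inr a
        rw [hLdef, Monoid.Coprod.lift_apply_inr]
        show Dbar (lab Δ hΔ hfin hend) (bS K) a.1 = _
        rw [Dbar_C Δ hΔ hfin hend a.1 a.2 a.2]
    intro a b hab
    have ha := DFunLike.congr_fun hcomp a
    have hb := DFunLike.congr_fun hcomp b
    simp only [MonoidHom.comp_apply, MonoidHom.id_apply] at ha hb
    rw [← ha, ← hb, hab]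
  · -- surjectivity
    set L := Monoid.Coprod.lift (Subgroup.inclusion hAB) (Subgroup.inclusion hCB) with hLdef
    intro y
    have hKle : K ≤ Subgroup.map K.subtype L.range := by
      refine le_trans (K_eq_closure Δ hΔ hfin).ge ?_
      rw [Subgroup.closure_le]
      rintro x ⟨c, i, rfl⟩
      by_cases hT : (c, i) ∈ TT Δ hΔ hfin
      · rw [gf_T Δ hΔ hfin hT]
        exact one_mem _
      by_cases hD : (c, i) ∈ DId Δ
      · refine ⟨L (Monoid.Coprod.inl ⟨gf Δ hΔ hfin c i, gf_mem_A Δ hΔ hfin hend hD⟩),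
          MonoidHom.mem_range.mpr ⟨_, rfl⟩, ?_⟩
        rw [hLdef, Monoid.Coprod.lift_apply_inl]
        rfl
      · refine ⟨L (Monoid.Coprod.inr ⟨gf Δ hΔ hfin c i,
          Subgroup.subset_closure ⟨c, i, hT, hD, rfl⟩⟩),
          MonoidHom.mem_range.mpr ⟨_, rfl⟩, ?_⟩
        rw [hLdef, Monoid.Coprod.lift_apply_inr]
        rfl
    obtain ⟨z, hz, hzy⟩ := hKle y.2
    obtain ⟨m, rfl⟩ := MonoidHom.mem_range.mp hz
    exact ⟨m, Subtype.ext hzy⟩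

end FF


/-- Any subgraph of the Schreier graph of `K` with finitely many reachable
vertices reads off a free factor of `K`. -/
theorem isFreeFactor_Lang (Δ : Set (VS K × Fin n × VS K)) (hΔ : Δ ⊆ SE K)
    (hfin : {v | Reach Δ (bS K) v}.Finite) : IsFreeFactor (Lang Δ (bS K)) K := by
  have hΔ' : restrict Δ (bS K) ⊆ SE K := (restrict_subset Δ (bS K)).trans hΔ
  have hfin' : {v | Reach (restrict Δ (bS K)) (bS K) v}.Finite := by
    refine Set.Finite.subset hfin ?_
    intro v hv
    exact (Reach_restrict_iff Δ (bS K) v).mp hv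
  have hend' : ∀ e ∈ restrict Δ (bS K), Reach (restrict Δ (bS K)) (bS K) e.1 ∧
      Reach (restrict Δ (bS K)) (bS K) e.2.2 := fun e he => restrict_endpoints he
  have h := isFreeFactor_Lang_aux (restrict Δ (bS K)) hΔ' hfin' hend'
  rwa [Lang_restrict] at h

/-- Pushing a labelled graph into the Schreier graph of `K`. -/
theorem push {V₁ : Type*} (E₁ : Set (V₁ × Fin n × V₁)) (b₁ : V₁)
    (hHK : Lang E₁ b₁ ≤ K) :
    ∃ (Δ : Set (VS K × Fin n × VS K)) (φ : V₁ → VS K),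
      Δ ⊆ SE K ∧ Lang E₁ b₁ ≤ Lang Δ (bS K) ∧ Lang Δ (bS K) ≤ K ∧
      {v | Reach Δ (bS K) v} ⊆ φ '' {v | Reach E₁ b₁ v} := by
  classical
  set φ : V₁ → VS K := fun v =>
    if h : Reach E₁ b₁ v then vmul K (bS K) (FreeGroup.mk (Classical.choose h)) else bS K
    with hφ
  have key : ∀ v m, Walk E₁ b₁ v m → φ v = vmul K (bS K) (FreeGroup.mk m) := by
    intro v m hw
    have hr : Reach E₁ b₁ v := ⟨m, hw⟩
    have hw' := Classical.choose_spec hr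
    have hg : FreeGroup.mk (Classical.choose hr) * (FreeGroup.mk m)⁻¹ ∈ K :=
      hHK ⟨Classical.choose hr ++ FreeGroup.invRev m, hw'.append hw.reverse,
        by rw [← FreeGroup.mul_mk, ← FreeGroup.inv_mk]⟩
    calc φ v = vmul K (bS K) (FreeGroup.mk (Classical.choose hr)) := by
          show dite _ _ _ = _
          rw [dif_pos hr]
    _ = vmul K (vmul K (bS K) (FreeGroup.mk (Classical.choose hr) * (FreeGroup.mk m)⁻¹))
        (FreeGroup.mk m) := by rw [vmul_vmul]; congr 1; group
    _ = vmul K (bS K) (FreeGroup.mk m) := by rw [vmul_mem hg]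
  have φb : φ b₁ = bS K := by
    rw [key b₁ [] (Walk.nil b₁), ← FreeGroup.one_eq_mk, vmul_one]
  set Δ : Set (VS K × Fin n × VS K) :=
    {e | ∃ u i v, (u, i, v) ∈ E₁ ∧ Reach E₁ b₁ u ∧ Reach E₁ b₁ v ∧ e = (φ u, i, φ v)}
    with hΔdef
  have hΔSE : Δ ⊆ SE K := by
    rintro e ⟨u, i, v, he, hu, hv, rfl⟩
    show φ v = vmul K (φ u) (FreeGroup.of i)
    obtain ⟨mu, hwu⟩ := hu
    have hstep : StepRel E₁ u (i, true) v := he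
    have hwv : Walk E₁ b₁ v (mu ++ [(i, true)]) := hwu.append (Walk.single hstep)
    rw [key v _ hwv, key u mu hwu, ← FreeGroup.mul_mk, ← vmul_vmul]
    rfl
  have hmap : ∀ u v m, Walk E₁ u v m → Reach E₁ b₁ u → Walk Δ (φ u) (φ v) m := by
    intro u v m hw
    induction hw with
    | nil => intro _; exact Walk.nil _
    | @cons u' v' w' ℓ m' hs hwk ih =>
      intro hu'
      have hv' : Reach E₁ b₁ v' := hu'.step hs
      rcases ℓ with ⟨i, bb⟩
      cases bb
      · have he : (v', i, u') ∈ E₁ := hs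
        have hΔe : (φ v', i, φ u') ∈ Δ := ⟨v', i, u', he, hv', hu', rfl⟩
        exact Walk.cons (show StepRel Δ (φ u') (i, false) (φ v') from hΔe) (ih hv')
      · have he : (u', i, v') ∈ E₁ := hs
        have hΔe : (φ u', i, φ v') ∈ Δ := ⟨u', i, v', he, hu', hv', rfl⟩
        exact Walk.cons (show StepRel Δ (φ u') (i, true) (φ v') from hΔe) (ih hv')
  refine ⟨Δ, φ, hΔSE, ?_, ?_, ?_⟩
  · rintro x ⟨m, hw, rfl⟩
    refine ⟨m, ?_, rfl⟩
    have := hmap b₁ b₁ m hw (Reach.refl E₁ b₁)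
    rwa [φb] at this
  · have := Lang.mono hΔSE (bS K)
    rwa [Lang_SE] at this
  · intro y hy
    obtain ⟨m, hw⟩ := hy
    have haux : ∀ (x y : VS K) m, Walk Δ x y m →
        x ∈ φ '' {v | Reach E₁ b₁ v} → y ∈ φ '' {v | Reach E₁ b₁ v} := by
      intro x y m hw
      induction hw with
      | nil => exact id
      | @cons x' y' z' ℓ m' hs hwk ih =>
        intro hx'
        refine ih ?_
        rcases ℓ with ⟨i, bb⟩
        cases bb
        · obtain ⟨u, i', v, he, hu, hv, heq⟩ := (show (y', i, x') ∈ Δ from hs)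
          have : y' = φ u := congrArg Prod.fst heq
          exact this ▸ ⟨u, hu, rfl⟩
        · obtain ⟨u, i', v, he, hu, hv, heq⟩ := (show (x', i, y') ∈ Δ from hs)
          have : y' = φ v := congrArg (fun e => e.2.2) heq
          exact this ▸ ⟨v, hv, rfl⟩
    exact haux (bS K) y m hw ⟨b₁, Reach.refl E₁ b₁, φb⟩


/-! ### Relabelling a graph over `Fin V₀`, and candidate subgroups -/

theorem relabel {V₁ : Type*} (E₁ : Set (V₁ × Fin n × V₁)) (b₁ : V₁) {V₀ : ℕ}
    (hfin : {v | Reach E₁ b₁ v}.Finite) (hcard : {v | Reach E₁ b₁ v}.ncard ≤ V₀) :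
    ∃ (E₂ : Set (Fin V₀ × Fin n × Fin V₀)) (b₂ : Fin V₀), Lang E₂ b₂ = Lang E₁ b₁ := by
  classical
  set R := {v | Reach E₁ b₁ v} with hR
  have : Finite ↥R := hfin.to_subtype
  have hcard' : Nat.card ↥R ≤ V₀ := by rwa [Nat.card_coe_set_eq]
  set ψ : ↥R ↪ Fin V₀ :=
    (Finite.equivFin ↥R).toEmbedding.trans (Fin.castLEEmb hcard') with hψ
  set E₂ : Set (Fin V₀ × Fin n × Fin V₀) :=
    {e | ∃ (u v : ↥R) (i : Fin n), (u.1, i, v.1) ∈ E₁ ∧ e = (ψ u, i, ψ v)} with hE₂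
  have hbR : b₁ ∈ R := Reach.refl E₁ b₁
  refine ⟨E₂, ψ ⟨b₁, hbR⟩, ?_⟩
  have fwd : ∀ u v m, Walk (restrict E₁ b₁) u v m → ∀ hu : u ∈ R,
      ∃ hv : v ∈ R, Walk E₂ (ψ ⟨u, hu⟩) (ψ ⟨v, hv⟩) m := by
    intro u v m hw
    induction hw with
    | nil => intro hu; exact ⟨hu, Walk.nil _⟩
    | @cons u' v' w' ℓ m' hs hwk ih =>
      intro hu'
      rcases ℓ with ⟨i, bb⟩
      cases bb
      · have he : (v', i, u') ∈ restrict E₁ b₁ := hs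
        have hv' : v' ∈ R := (Reach_restrict_iff E₁ b₁ v').mp (restrict_endpoints he).1
        obtain ⟨hw'', hwalk⟩ := ih hv'
        refine ⟨hw'', Walk.cons ?_ hwalk⟩
        show (ψ ⟨v', hv'⟩, i, ψ ⟨u', hu'⟩) ∈ E₂
        exact ⟨⟨v', hv'⟩, ⟨u', hu'⟩, i, he.1, rfl⟩
      · have he : (u', i, v') ∈ restrict E₁ b₁ := hs
        have hv' : v' ∈ R := (Reach_restrict_iff E₁ b₁ v').mp (restrict_endpoints he).2
        obtain ⟨hw'', hwalk⟩ := ih hv'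
        refine ⟨hw'', Walk.cons ?_ hwalk⟩
        show (ψ ⟨u', hu'⟩, i, ψ ⟨v', hv'⟩) ∈ E₂
        exact ⟨⟨u', hu'⟩, ⟨v', hv'⟩, i, he.1, rfl⟩
  have bwd : ∀ x y m, Walk E₂ x y m → ∀ u : ↥R, x = ψ u →
      ∃ v : ↥R, y = ψ v ∧ Walk E₁ u.1 v.1 m := by
    intro x y m hw
    induction hw with
    | nil => intro u hu; exact ⟨u, hu, Walk.nil _⟩
    | @cons x' y' z' ℓ m' hs hwk ih =>
      intro u hu
      rcases ℓ with ⟨i, bb⟩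
      cases bb
      · obtain ⟨u', v', i', he, heq⟩ := (show (y', i, x') ∈ E₂ from hs)
        have hx : x' = ψ v' := congrArg (fun e => e.2.2) heq
        have hy : y' = ψ u' := congrArg Prod.fst heq
        have hi : i = i' := congrArg (fun e => e.2.1) heq
        have huv : v' = u := ψ.injective (by rw [← hx, hu])
        obtain ⟨v, hv, hwalk⟩ := ih u' hy
        refine ⟨v, hv, Walk.cons ?_ hwalk⟩
        show (u'.1, i, u.1) ∈ E₁
        rw [hi, ← huv]
        exact he
      · obtain ⟨u', v', i', he, heq⟩ := (show (x', i, y') ∈ E₂ from hs)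
        have hx : x' = ψ u' := congrArg Prod.fst heq
        have hy : y' = ψ v' := congrArg (fun e => e.2.2) heq
        have hi : i = i' := congrArg (fun e => e.2.1) heq
        have huv : u' = u := ψ.injective (by rw [← hx, hu])
        obtain ⟨v, hv, hwalk⟩ := ih v' hy
        refine ⟨v, hv, Walk.cons ?_ hwalk⟩
        show (u.1, i, v'.1) ∈ E₁
        rw [hi, ← huv]
        exact he
  ext x
  constructor
  · rintro ⟨m, hw, rfl⟩
    obtain ⟨v, hv, hwalk⟩ := bwd _ _ m hw ⟨b₁, hbR⟩ rfl
    have : v = ⟨b₁, hbR⟩ := ψ.injective hv.symm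
    rw [this] at hwalk
    exact ⟨m, hwalk, rfl⟩
  · rintro ⟨m, hw, rfl⟩
    obtain ⟨hv, hwalk⟩ := fwd b₁ b₁ m (hw.restrict (Reach.refl E₁ b₁)) hbR
    exact ⟨m, hwalk, rfl⟩

/-- The (finitely many) candidate subgroups readable from a graph on `Fin V₀`. -/
def CandSet (n V₀ : ℕ) : Set (Subgroup (FreeGroup (Fin n))) :=
  Set.range (fun p : Set (Fin V₀ × Fin n × Fin V₀) × Fin V₀ => Lang p.1 p.2)

theorem CandSet_finite (n V₀ : ℕ) : (CandSet n V₀).Finite := Set.finite_range _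

theorem Lang_fg {V : Type*} [Finite V] (E : Set (V × Fin n × V)) (b : V) :
    (Lang E b).FG := by
  classical
  set w : V → FreeGroup (Fin n) := fun v => if v = b then 1 else
    (if h : Reach E b v then FreeGroup.mk (Classical.choose h) else 1) with hw
  have hwb : w b = 1 := by simp [hw]
  have hreal : ∀ v, Reach E b v → ∃ m, Walk E b v m ∧ FreeGroup.mk m = w v := by
    intro v hr
    by_cases hb : v = b
    · subst hb
      refine ⟨[], Walk.nil _, ?_⟩
      rw [← FreeGroup.one_eq_mk, hwb]
    · refine ⟨Classical.choose hr, Classical.choose_spec hr, ?_⟩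
      simp [hw, hb, dif_pos hr]
  have heq := Lang_eq_closure_gset hwb hreal
  rw [heq]
  have hfin : (gset E b w).Finite := by
    have hsub : gset E b w ⊆
        (fun e : V × Fin n × V => w e.1 * FreeGroup.of e.2.1 * (w e.2.2)⁻¹) '' E := by
      rintro x ⟨u, i, v, he, hu, rfl⟩
      exact ⟨(u, i, v), he, rfl⟩
    exact ((Set.toFinite E).image _).subset hsub
  exact ⟨hfin.toFinset, by rw [Set.Finite.coe_toFinset]⟩


/-! ### The wedge of loops reading a finite generating set -/

section Wedge

variable (Lw : List (FreeGroup (Fin n)))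

/-- Vertex type of the wedge of loops: a base point plus positions inside each word. -/
abbrev WV := Option (Σ k : Fin Lw.length, Fin (Lw.get k).toWord.length)

/-- The `j`-th vertex on the `k`-th loop (`j = 0` and `j = length` are the base point). -/
def vpos (k : Fin Lw.length) (j : ℕ) : WV Lw :=
  if h : 0 < j ∧ j < (Lw.get k).toWord.length then some ⟨k, ⟨j, h.2⟩⟩ else none

/-- Edges of the wedge of loops. -/
def WE : Set (WV Lw × Fin n × WV Lw) :=
  {e | ∃ (k : Fin Lw.length) (j : ℕ) (hj : j < (Lw.get k).toWord.length),
    e = (if ((Lw.get k).toWord.get ⟨j, hj⟩).2 then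
      (vpos Lw k j, ((Lw.get k).toWord.get ⟨j, hj⟩).1, vpos Lw k (j + 1))
    else
      (vpos Lw k (j + 1), ((Lw.get k).toWord.get ⟨j, hj⟩).1, vpos Lw k j))}

theorem wedge_step (k : Fin Lw.length) (j : ℕ) (hj : j < (Lw.get k).toWord.length) :
    StepRel (WE Lw) (vpos Lw k j) ((Lw.get k).toWord.get ⟨j, hj⟩) (vpos Lw k (j + 1)) := by
  rcases hℓ : (Lw.get k).toWord.get ⟨j, hj⟩ with ⟨i, bb⟩
  cases bb
  · show (vpos Lw k (j + 1), i, vpos Lw k j) ∈ WE Lw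
    exact ⟨k, j, hj, by rw [hℓ]; simp⟩
  · show (vpos Lw k j, i, vpos Lw k (j + 1)) ∈ WE Lw
    exact ⟨k, j, hj, by rw [hℓ]; simp⟩

theorem vpos_len (k : Fin Lw.length) : vpos Lw k (Lw.get k).toWord.length = none := by
  rw [vpos, dif_neg]
  omega

theorem vpos_zero (k : Fin Lw.length) : vpos Lw k 0 = none := by
  rw [vpos, dif_neg]
  omega

theorem wedge_suffix_walk (k : Fin Lw.length) :
    ∀ (c j : ℕ), j + c = (Lw.get k).toWord.length →
      Walk (WE Lw) (vpos Lw k j) none (List.drop j (Lw.get k).toWord) := by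
  intro c
  induction c with
  | zero =>
    intro j hj
    rw [show j = (Lw.get k).toWord.length by omega, List.drop_length, vpos_len]
    exact Walk.nil _
  | succ c ih =>
    intro j hj
    have hjlt : j < (Lw.get k).toWord.length := by omega
    rw [List.drop_eq_getElem_cons hjlt]
    refine Walk.cons ?_ (ih (j + 1) (by omega))
    have := wedge_step Lw k j hjlt
    simpa using this

theorem wedge_reads (k : Fin Lw.length) : Lw.get k ∈ Lang (WE Lw) none := by
  refine ⟨(Lw.get k).toWord, ?_, FreeGroup.mk_toWord⟩
  have := wedge_suffix_walk Lw k (Lw.get k).toWord.length 0 (by omega)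
  rwa [vpos_zero, List.drop_zero] at this

/-- The prefix labelling of the wedge. -/
def wlab : WV Lw → FreeGroup (Fin n)
  | none => 1
  | some ⟨k, j⟩ => FreeGroup.mk (List.take j.1 (Lw.get k).toWord)

theorem wlab_vpos (k : Fin Lw.length) (j : ℕ) (hj : j < (Lw.get k).toWord.length) :
    wlab Lw (vpos Lw k j) = FreeGroup.mk (List.take j (Lw.get k).toWord) := by
  by_cases h0 : 0 < j
  · rw [vpos, dif_pos ⟨h0, hj⟩]; rfl
  · have : j = 0 := by omega
    subst this
    rw [vpos_zero]
    show (1 : FreeGroup (Fin n)) = _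
    rw [List.take_zero, ← FreeGroup.one_eq_mk]

theorem wedge_prefix_walk (k : Fin Lw.length) :
    ∀ j, j ≤ (Lw.get k).toWord.length →
      Walk (WE Lw) none (vpos Lw k j) (List.take j (Lw.get k).toWord) := by
  intro j
  induction j with
  | zero =>
    intro _
    rw [vpos_zero, List.take_zero]
    exact Walk.nil _
  | succ j ih =>
    intro hj
    have hjlt : j < (Lw.get k).toWord.length := by omega
    have htake : List.take (j + 1) (Lw.get k).toWord =
        List.take j (Lw.get k).toWord ++ [(Lw.get k).toWord.get ⟨j, hjlt⟩] := by
      rw [List.take_succ, List.getElem?_eq_getElem hjlt]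
      rfl
    rw [htake]
    exact (ih (by omega)).append (Walk.single (wedge_step Lw k j hjlt))

/-- Shape of vertices touched by edges. -/
def WP (v : WV Lw) : Prop :=
  v = none ∨ ∃ (k : Fin Lw.length) (j : ℕ) (h : 0 < j ∧ j < (Lw.get k).toWord.length),
    v = some ⟨k, ⟨j, h.2⟩⟩

theorem vpos_WP (k : Fin Lw.length) (j : ℕ) : WP Lw (vpos Lw k j) := by
  rw [vpos]
  split
  · right; exact ⟨k, j, ‹_›, rfl⟩
  · left; rfl

theorem wedge_walk_WP : ∀ u v m, Walk (WE Lw) u v m → WP Lw u → WP Lw v := by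
  intro u v m hw
  induction hw with
  | nil => exact id
  | @cons u' v' w' ℓ m' hs hwk ih =>
    intro _
    refine ih ?_
    rcases ℓ with ⟨i, bb⟩
    have key : ∀ (e : WV Lw × Fin n × WV Lw), e ∈ WE Lw → WP Lw e.1 ∧ WP Lw e.2.2 := by
      rintro e ⟨k, j, hj, rfl⟩
      split
      · exact ⟨vpos_WP Lw k j, vpos_WP Lw k (j + 1)⟩
      · exact ⟨vpos_WP Lw k (j + 1), vpos_WP Lw k j⟩
    cases bb
    · exact (key _ (show (v', i, u') ∈ WE Lw from hs)).1
    · exact (key _ (show (u', i, v') ∈ WE Lw from hs)).2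

theorem wedge_realizes : ∀ v, Reach (WE Lw) none v →
    ∃ m, Walk (WE Lw) none v m ∧ FreeGroup.mk m = wlab Lw v := by
  intro v hr
  have hP : WP Lw v := by
    obtain ⟨m, hw⟩ := hr
    exact wedge_walk_WP Lw none v m hw (Or.inl rfl)
  rcases hP with rfl | ⟨k, j, hj, rfl⟩
  · exact ⟨[], Walk.nil _, by rw [← FreeGroup.one_eq_mk]; rfl⟩
  · have hvpos : vpos Lw k j = some ⟨k, ⟨j, hj.2⟩⟩ := by rw [vpos, dif_pos hj]
    refine ⟨List.take j (Lw.get k).toWord, ?_, rfl⟩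
    have := wedge_prefix_walk Lw k j (le_of_lt hj.2)
    rwa [hvpos] at this


theorem mk_take_succ (k : Fin Lw.length) (j : ℕ) (hj : j < (Lw.get k).toWord.length) :
    FreeGroup.mk (List.take (j + 1) (Lw.get k).toWord) =
      FreeGroup.mk (List.take j (Lw.get k).toWord) * lette ((Lw.get k).toWord.get ⟨j, hj⟩) := by
  rw [List.take_succ, List.getElem?_eq_getElem hj, Option.toList_some, ← FreeGroup.mul_mk,
    mk_singleton_eq']
  rfl

theorem wedge_lang : Lang (WE Lw) none = Subgroup.closure {x | x ∈ Lw} := by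
  apply le_antisymm
  · rw [Lang_eq_closure_gset (w := wlab Lw) (show wlab Lw none = 1 from rfl) (wedge_realizes Lw), Subgroup.closure_le]
    rintro x ⟨u, i, v, he, hu, rfl⟩
    obtain ⟨k, j, hj, heq⟩ := he
    rcases hget : (Lw.get k).toWord.get ⟨j, hj⟩ with ⟨i', bb⟩
    rw [hget] at heq
    have hAk : wlab Lw (vpos Lw k j) = FreeGroup.mk (List.take j (Lw.get k).toWord) :=
      wlab_vpos Lw k j hj
    have hW : FreeGroup.mk (List.take ((Lw.get k).toWord.length) (Lw.get k).toWord) =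
        Lw.get k := by rw [List.take_length, FreeGroup.mk_toWord]
    cases bb
    · simp only [if_neg Bool.false_ne_true] at heq
      have hu' : u = vpos Lw k (j + 1) := congrArg Prod.fst heq
      have hi : i = i' := congrArg (fun e => e.2.1) heq
      have hv : v = vpos Lw k j := congrArg (fun e => e.2.2) heq
      have hsucc := mk_take_succ Lw k j hj
      rw [hget] at hsucc
      rw [show lette ((i' : Fin n), false) = (FreeGroup.of i')⁻¹ from rfl] at hsucc
      by_cases hlen : j + 1 < (Lw.get k).toWord.length
      · have hB : wlab Lw (vpos Lw k (j + 1)) =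
            FreeGroup.mk (List.take (j + 1) (Lw.get k).toWord) := wlab_vpos Lw k (j + 1) hlen
        rw [hu', hv, hi, hB, hsucc, hAk]
        have : FreeGroup.mk (List.take j (Lw.get k).toWord) * (FreeGroup.of i')⁻¹ *
            FreeGroup.of i' * (FreeGroup.mk (List.take j (Lw.get k).toWord))⁻¹ = 1 := by group
        rw [this]
        exact one_mem _
      · have hj1 : j + 1 = (Lw.get k).toWord.length := by omega
        have hB : wlab Lw (vpos Lw k (j + 1)) = 1 := by rw [hj1, vpos_len]; rfl
        rw [hu', hv, hi, hB, hAk]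
        have : (1 : FreeGroup (Fin n)) * FreeGroup.of i' *
            (FreeGroup.mk (List.take j (Lw.get k).toWord))⁻¹ =
            (FreeGroup.mk (List.take (j + 1) (Lw.get k).toWord))⁻¹ := by
          rw [hsucc]; group
        rw [this, hj1, hW]
        exact inv_mem (Subgroup.subset_closure (List.get_mem Lw k))
    · simp only [if_pos] at heq
      have hu' : u = vpos Lw k j := congrArg Prod.fst heq
      have hi : i = i' := congrArg (fun e => e.2.1) heq
      have hv : v = vpos Lw k (j + 1) := congrArg (fun e => e.2.2) heq
      have hsucc := mk_take_succ Lw k j hj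
      rw [hget] at hsucc
      rw [show lette ((i' : Fin n), true) = FreeGroup.of i' from rfl] at hsucc
      by_cases hlen : j + 1 < (Lw.get k).toWord.length
      · have hB : wlab Lw (vpos Lw k (j + 1)) =
            FreeGroup.mk (List.take (j + 1) (Lw.get k).toWord) := wlab_vpos Lw k (j + 1) hlen
        rw [hu', hv, hi, hB, hsucc, hAk]
        have : FreeGroup.mk (List.take j (Lw.get k).toWord) * FreeGroup.of i' *
            (FreeGroup.mk (List.take j (Lw.get k).toWord) * FreeGroup.of i')⁻¹ = 1 := by group
        rw [this]
        exact one_mem _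
      · have hj1 : j + 1 = (Lw.get k).toWord.length := by omega
        have hB : wlab Lw (vpos Lw k (j + 1)) = 1 := by rw [hj1, vpos_len]; rfl
        rw [hu', hv, hi, hB, hAk]
        have : FreeGroup.mk (List.take j (Lw.get k).toWord) * FreeGroup.of i' * (1 : FreeGroup (Fin n))⁻¹ =
            FreeGroup.mk (List.take (j + 1) (Lw.get k).toWord) := by
          rw [hsucc]; group
        rw [this, hj1, hW]
        exact Subgroup.subset_closure (List.get_mem Lw k)
  · rw [Subgroup.closure_le]
    intro x hx
    obtain ⟨k, hk⟩ := List.mem_iff_get.mp hx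
    rw [← hk]
    exact wedge_reads Lw k

end Wedge

theorem closure_mem_CandSet (Sset : Set (FreeGroup (Fin n))) (hS : Sset.Finite) :
    ∃ V₀ : ℕ, Subgroup.closure Sset ∈ CandSet n V₀ := by
  classical
  set Lw := hS.toFinset.toList with hLw
  have hmem : {x | x ∈ Lw} = Sset := by
    ext x
    simp [hLw, Finset.mem_toList, Set.Finite.mem_toFinset]
  refine ⟨Nat.card (WV Lw), ?_⟩
  have hreachfin : {v | Reach (WE Lw) (none : WV Lw) v}.Finite := Set.toFinite _
  have hcard : {v | Reach (WE Lw) (none : WV Lw) v}.ncard ≤ Nat.card (WV Lw) := by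
    calc {v | Reach (WE Lw) (none : WV Lw) v}.ncard
        ≤ (Set.univ : Set (WV Lw)).ncard :=
          Set.ncard_le_ncard (Set.subset_univ _) (Set.toFinite _)
    _ = Nat.card (WV Lw) := Set.ncard_univ _
  obtain ⟨E₂, b₂, hE₂⟩ := relabel (WE Lw) none hreachfin hcard
  exact ⟨(E₂, b₂), by show Lang E₂ b₂ = _; rw [hE₂, wedge_lang, hmem]⟩

/-- The Takahashi step: every candidate subgroup contained in `K` extends to a
candidate subgroup that is a free factor of `K`. -/
theorem push_cand {V₀ : ℕ} (M : Subgroup (FreeGroup (Fin n))) (hM : M ∈ CandSet n V₀)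
    (K : Subgroup (FreeGroup (Fin n))) (hMK : M ≤ K) :
    ∃ L, L ∈ CandSet n V₀ ∧ M ≤ L ∧ L ≤ K ∧ IsFreeFactor L K := by
  obtain ⟨⟨E₁, b₁⟩, hLang'⟩ := hM
  have hLang : Lang E₁ b₁ = M := hLang'
  have hMK' : Lang E₁ b₁ ≤ K := by rw [hLang]; exact hMK
  obtain ⟨Δ, φ, hΔSE, hle1, hle2, himg⟩ := push E₁ b₁ hMK'
  have hreachfin : {v | Reach Δ (bS K) v}.Finite :=
    ((Set.toFinite {v | Reach E₁ b₁ v}).image φ).subset himg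
  have hcard : {v | Reach Δ (bS K) v}.ncard ≤ V₀ := by
    calc {v | Reach Δ (bS K) v}.ncard
        ≤ (φ '' {v | Reach E₁ b₁ v}).ncard :=
          Set.ncard_le_ncard himg ((Set.toFinite _).image φ)
    _ ≤ {v | Reach E₁ b₁ v}.ncard := Set.ncard_image_le (Set.toFinite _)
    _ ≤ (Set.univ : Set (Fin V₀)).ncard :=
          Set.ncard_le_ncard (Set.subset_univ _) (Set.toFinite _)
    _ = V₀ := by rw [Set.ncard_univ]; simp
  obtain ⟨E₂, b₂, hE₂⟩ := relabel Δ (bS K) hreachfin hcard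
  exact ⟨Lang Δ (bS K), ⟨(E₂, b₂), hE₂⟩, by rw [← hLang]; exact hle1, hle2,
    isFreeFactor_Lang Δ hΔSE hreachfin⟩

theorem cand_fg {V₀ : ℕ} (M : Subgroup (FreeGroup (Fin n))) (hM : M ∈ CandSet n V₀) :
    M.FG := by
  obtain ⟨⟨E, b⟩, hLang'⟩ := hM
  have hLang : Lang E b = M := hLang'
  rw [← hLang]
  exact Lang_fg E b


theorem directed_finset {J : Type} [Nonempty J] (N : J → Subgroup (FreeGroup (Fin n)))
    (hdir : ∀ j₁ j₂ : J, ∃ j₃ : J, N j₃ ≤ N j₁ ⊓ N j₂) (fs : Finset J) :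
    ∃ j₀, ∀ j ∈ fs, N j₀ ≤ N j := by
  classical
  induction fs using Finset.induction with
  | empty => exact ⟨Classical.arbitrary J, by simp⟩
  | @insert j fs hj ih =>
    obtain ⟨j₀, hj₀⟩ := ih
    obtain ⟨j₁, hj₁⟩ := hdir j j₀
    refine ⟨j₁, fun j' hj' => ?_⟩
    rcases Finset.mem_insert.mp hj' with rfl | h
    · exact hj₁.trans inf_le_left
    · exact (hj₁.trans inf_le_right).trans (hj₀ j' h)

end DFF

/-- Let `(N_j)_{j ∈ J}` be a downward-directed family of subgroups of `F_n`, let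
`N = ⋂ N_j`, and let `S ⊆ N` be finite.  Then there are a finitely generated
subgroup `H` with `S ⊆ H ≤ N` and an index `j₀` such that `H` is a free factor of
every subgroup `N'` with `H ≤ N' ≤ N_{j₀}`. -/
theorem directed_family_freeFactor (n : ℕ) (J : Type) [Nonempty J]
    (N : J → Subgroup (FreeGroup (Fin n)))
    (hdir : ∀ j₁ j₂ : J, ∃ j₃ : J, N j₃ ≤ N j₁ ⊓ N j₂)
    (S : Set (FreeGroup (Fin n))) (hSfin : S.Finite)
    (hS : S ⊆ ↑(⨅ j : J, N j)) :
    ∃ (H : Subgroup (FreeGroup (Fin n))) (j₀ : J),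
      H.FG ∧ S ⊆ ↑H ∧ H ≤ ⨅ j : J, N j ∧
        ∀ N' : Subgroup (FreeGroup (Fin n)), H ≤ N' → N' ≤ N j₀ →
          IsFreeFactor H N' := by
  classical
  obtain ⟨V₀, hcand⟩ := DFF.closure_mem_CandSet S hSfin
  set 𝒮 : Set (Subgroup (FreeGroup (Fin n))) :=
    {M | M ∈ DFF.CandSet n V₀ ∧ S ⊆ ↑M ∧ M ≤ ⨅ j, N j} with h𝒮
  have h𝒮fin : 𝒮.Finite := (DFF.CandSet_finite n V₀).subset fun M hM => hM.1
  have h𝒮ne : 𝒮.Nonempty :=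
    ⟨Subgroup.closure S, hcand, Subgroup.subset_closure, (Subgroup.closure_le _).mpr hS⟩
  obtain ⟨H, hH𝒮, hmax⟩ : ∃ H ∈ 𝒮, ∀ L ∈ 𝒮, H ≤ L → H = L := by
    obtain ⟨H, hM⟩ := h𝒮fin.exists_maximal h𝒮ne
    exact ⟨H, hM.1, fun L hL hle => le_antisymm hle (hM.2 hL hle)⟩
  set jf : Subgroup (FreeGroup (Fin n)) → J := fun M =>
    if h : ∃ j, ¬ M ≤ N j then Classical.choose h else Classical.arbitrary J with hjf
  have hBadfin : {M | M ∈ DFF.CandSet n V₀ ∧ ¬ M ≤ ⨅ j, N j}.Finite :=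
    (DFF.CandSet_finite n V₀).subset fun M hM => hM.1
  obtain ⟨j₀, hj₀⟩ := DFF.directed_finset N hdir (hBadfin.toFinset.image jf)
  refine ⟨H, j₀, DFF.cand_fg H hH𝒮.1, hH𝒮.2.1, hH𝒮.2.2, ?_⟩
  intro N' hHN' hN'j₀
  obtain ⟨L, hLc, hHL, hLN', hfree⟩ := DFF.push_cand H hH𝒮.1 N' hHN'
  have hLN : L ≤ ⨅ j, N j := by
    by_contra hnot
    have hLBad : L ∈ {M | M ∈ DFF.CandSet n V₀ ∧ ¬ M ≤ ⨅ j, N j} := ⟨hLc, hnot⟩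
    have hex : ∃ j, ¬ L ≤ N j := by
      by_contra h
      push_neg at h
      exact hnot (le_iInf h)
    have hjL : ¬ L ≤ N (jf L) := by
      rw [hjf]
      simp only
      rw [dif_pos hex]
      exact Classical.choose_spec hex
    refine hjL (hLN'.trans (hN'j₀.trans (hj₀ (jf L) ?_)))
    exact Finset.mem_image_of_mem jf (hBadfin.mem_toFinset.mpr hLBad)
  have hL𝒮 : L ∈ 𝒮 := ⟨hLc, fun x hx => hHL (hH𝒮.2.1 hx), hLN⟩
  have hHL' : H = L := hmax L hL𝒮 hHL
  rw [hHL']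
  exact hfree
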